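/- Let X be a k-vector field on ℝ^n × (Fin k → ℝ^n) satisfying the SOPDE condition, and let φ = (ψ, χ) : ℝ^k → ℝ^n × (Fin k → ℝ^n) be a differentiable integral section of X. Then (a) χ(t)_α = ∂ψ/∂t^α(t) for every α and every t ∈ ℝ^k (so φ is the canonical prolongation of ψ, i.e. φ is holonomic), and (b) the mixed second partial derivatives of ψ exist with ∂²ψ/∂t^α∂t^β(t) equal to the β-th component of the vertical part of X_α(φ(t)) for all α, β, t. (The paper's equations (nn): integral sections of SOPDEs are holonomic and solve second-order PDEs.) -/
import Mathlib


/-- The paper's equations (nn): integral sections of SOPDEs are holonomic and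
solve second-order PDEs. If `X` is a SOPDE k-vector field on
`ℝ^n × (Fin k → ℝ^n)` and `φ = (ψ, χ)` is a differentiable integral section,
then (a) `χ(t)_α = ∂ψ/∂t^α(t)`, and (b) the mixed second partials of `ψ` exist,
with `∂²ψ/∂t^α∂t^β(t)` equal to the `β`-component of the vertical part of
`X_α(φ(t))`. -/
theorem stmt8 {k n : ℕ} (hk : 1 ≤ k) (hn : 1 ≤ n)
    (X : Fin k → ((Fin n → ℝ) × (Fin k → Fin n → ℝ)) →
        ((Fin n → ℝ) × (Fin k → Fin n → ℝ)))
    (hsopde : ∀ α q v, (X α (q, v)).1 = v α)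
    (φ : (Fin k → ℝ) → (Fin n → ℝ) × (Fin k → Fin n → ℝ))
    (hφ : Differentiable ℝ φ)
    (hint : ∀ t α, fderiv ℝ φ t (Pi.single α 1) = X α (φ t)) :
    (∀ t α, (φ t).2 α = fderiv ℝ (fun s => (φ s).1) t (Pi.single α 1)) ∧
    (∀ t α β,
      DifferentiableAt ℝ
        (fun s => fderiv ℝ (fun r => (φ r).1) s (Pi.single β 1)) t ∧
      fderiv ℝ (fun s => fderiv ℝ (fun r => (φ r).1) s (Pi.single β 1)) t
          (Pi.single α 1) = (X α (φ t)).2 β) := by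
  -- derivative of the first component
  have hfst : ∀ s, fderiv ℝ (fun r => (φ r).1) s
      = (ContinuousLinearMap.fst ℝ (Fin n → ℝ) (Fin k → Fin n → ℝ)).comp
          (fderiv ℝ φ s) := by
    intro s
    exact (((ContinuousLinearMap.fst ℝ (Fin n → ℝ)
      (Fin k → Fin n → ℝ)).hasFDerivAt.comp s (hφ s).hasFDerivAt)).fderiv
  have ha : ∀ t α, (φ t).2 α = fderiv ℝ (fun s => (φ s).1) t (Pi.single α 1) := by
    intro t α
    rw [hfst t]
    simp only [ContinuousLinearMap.comp_apply, ContinuousLinearMap.coe_fst',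
      hint t α]
    rw [show X α (φ t) = X α ((φ t).1, (φ t).2) by rfl, hsopde]
  refine ⟨ha, ?_⟩
  intro t α β
  -- the function s ↦ fderiv ψ s (single β 1) equals s ↦ (φ s).2 β
  have key : (fun s => fderiv ℝ (fun r => (φ r).1) s (Pi.single β 1))
      = fun s => (φ s).2 β := by
    funext s
    exact (ha s β).symm
  have hdiff : Differentiable ℝ (fun s => (φ s).2 β) := by
    have L : (Fin n → ℝ) × (Fin k → Fin n → ℝ) →L[ℝ] (Fin n → ℝ) :=
      (ContinuousLinearMap.proj β).comp
        (ContinuousLinearMap.snd ℝ (Fin n → ℝ) (Fin k → Fin n → ℝ))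
    exact (ContinuousLinearMap.proj (R := ℝ) (φ := fun _ : Fin k => (Fin n → ℝ)) β).differentiable.comp
      ((ContinuousLinearMap.snd ℝ (Fin n → ℝ) (Fin k → Fin n → ℝ)).differentiable.comp hφ)
  have hder : ∀ s, fderiv ℝ (fun s => (φ s).2 β) s
      = ((ContinuousLinearMap.proj (R := ℝ) (φ := fun _ : Fin k => (Fin n → ℝ)) β).comp
          (ContinuousLinearMap.snd ℝ (Fin n → ℝ) (Fin k → Fin n → ℝ))).comp
          (fderiv ℝ φ s) := by
    intro s
    exact (((ContinuousLinearMap.proj (R := ℝ) (φ := fun _ : Fin k => (Fin n → ℝ)) β).comp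
      (ContinuousLinearMap.snd ℝ (Fin n → ℝ) (Fin k → Fin n → ℝ))).hasFDerivAt.comp s
      (hφ s).hasFDerivAt).fderiv
  rw [key]
  refine ⟨(hdiff t), ?_⟩
  rw [hder t]
  simp [hint t α]
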